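/- For every Borel set B ⊆ ℝ³, the four-dimensional Lebesgue measure of the set { (h₁₁, h₁₂, h₂₁, h₂₂) ∈ (1,2]⁴ : (h₁₂h₂₁, h₁₂h₁₁, h₁₁h₂₂) ∈ B } is at most 2 times the three-dimensional Lebesgue measure of B. -/

import Mathlib

open MeasureTheory Set ENNReal

-- scaling helper: integrating k (c*t) over t ∈ ℝ is at most ∫ k, when c ≥ 1
lemma scale_lintegral_le {c : ℝ} (hc : 1 < c) {k : ℝ → ℝ≥0∞} (hk : Measurable k) :
    ∫⁻ t, k (c * t) ≤ ∫⁻ t, k t := by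
  have hc0 : c ≠ 0 := by positivity
  have h1 : ∫⁻ t, k (c * t) = ∫⁻ x, k x ∂(Measure.map (c * ·) volume) :=
    (lintegral_map hk (measurable_const_mul c)).symm
  rw [h1, Real.map_volume_mul_left hc0, lintegral_smul_measure]
  calc ENNReal.ofReal |c⁻¹| * ∫⁻ t, k t ≤ 1 * ∫⁻ t, k t := by
        gcongr
        rw [abs_of_pos (by positivity)]
        exact ENNReal.ofReal_le_one.mpr (inv_le_one_of_one_le₀ hc.le)
    _ = _ := one_mul _

lemma scale_volume_le {c : ℝ} (hc : 1 < c) (T : Set ℝ) :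
    volume {v : ℝ | c * v ∈ T} ≤ volume T := by
  have hc0 : c ≠ 0 := by positivity
  have : {v : ℝ | c * v ∈ T} = (c * ·) ⁻¹' T := rfl
  rw [this, Real.volume_preimage_mul_left hc0]
  calc ENNReal.ofReal |c⁻¹| * volume T ≤ 1 * volume T := by
        gcongr
        rw [abs_of_pos (by positivity)]
        exact ENNReal.ofReal_le_one.mpr (inv_le_one_of_one_le₀ hc.le)
    _ = _ := one_mul _

theorem preimage_measure_le_two_mul
    (B : Set (ℝ × ℝ × ℝ)) (hB : MeasurableSet B) :
    volume {h : ℝ × ℝ × ℝ × ℝ |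
        h ∈ (Set.Ioc (1 : ℝ) 2) ×ˢ (Set.Ioc (1 : ℝ) 2) ×ˢ (Set.Ioc (1 : ℝ) 2) ×ˢ
              (Set.Ioc (1 : ℝ) 2) ∧
        (h.2.1 * h.2.2.1, h.2.1 * h.1, h.1 * h.2.2.2) ∈ B}
      ≤ 2 * volume B := by
  classical
  -- slice function f(x,y) = volume of {w : (x,y,w) ∈ B}
  set f : ℝ × ℝ → ℝ≥0∞ := fun p => volume {w : ℝ | (p.1, p.2, w) ∈ B} with hf_def
  have hB3 : MeasurableSet {q : (ℝ × ℝ) × ℝ | (q.1.1, q.1.2, q.2) ∈ B} := by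
    have : Measurable fun q : (ℝ × ℝ) × ℝ => (q.1.1, q.1.2, q.2) := by fun_prop
    exact this hB
  have hfmeas : Measurable f := by
    have : f = fun p : ℝ × ℝ =>
        volume (Prod.mk p ⁻¹' {q : (ℝ × ℝ) × ℝ | (q.1.1, q.1.2, q.2) ∈ B}) := rfl
    rw [this]
    exact measurable_measure_prodMk_left hB3
  set g : ℝ → ℝ≥0∞ := fun y => ∫⁻ x, f (x, y) with hg_def
  have hgmeas : Measurable g := by
    have : Measurable (Function.uncurry fun y x => f (x, y)) :=
      hfmeas.comp measurable_swap
    exact this.lintegral_prod_right'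
  -- total integral of g equals volume B
  have hg_int : ∫⁻ y, g y = volume B := by
    have hswap : ∫⁻ y, ∫⁻ x, f (x, y) = ∫⁻ x, ∫⁻ y, f (x, y) :=
      lintegral_lintegral_swap (hfmeas.comp measurable_swap).aemeasurable
    rw [hg_def]
    simp only [hswap]
    have h1 : ∀ x : ℝ, ∫⁻ y, f (x, y) = volume (Prod.mk x ⁻¹' B) := by
      intro x
      rw [show (volume : Measure (ℝ × ℝ)) = (volume : Measure ℝ).prod volume from
        Measure.volume_eq_prod ℝ ℝ, Measure.prod_apply (measurable_prodMk_left hB)]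
      rfl
    simp only [h1]
    rw [show (volume : Measure (ℝ × ℝ × ℝ)) = (volume : Measure ℝ).prod volume from
      Measure.volume_eq_prod ℝ (ℝ × ℝ), Measure.prod_apply hB]
  -- measurability of the main set
  have hS : MeasurableSet {h : ℝ × ℝ × ℝ × ℝ |
      h ∈ (Set.Ioc (1 : ℝ) 2) ×ˢ (Set.Ioc (1 : ℝ) 2) ×ˢ (Set.Ioc (1 : ℝ) 2) ×ˢ
            (Set.Ioc (1 : ℝ) 2) ∧
      (h.2.1 * h.2.2.1, h.2.1 * h.1, h.1 * h.2.2.2) ∈ B} := by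
    apply MeasurableSet.inter
    · exact (measurableSet_Ioc.prod (measurableSet_Ioc.prod
        (measurableSet_Ioc.prod measurableSet_Ioc)))
    · have : Measurable fun h : ℝ × ℝ × ℝ × ℝ =>
          (h.2.1 * h.2.2.1, h.2.1 * h.1, h.1 * h.2.2.2) := by fun_prop
      exact this hB
  -- level 2 : for fixed a, b with 1 < a, 1 < b
  have key2 : ∀ a b : ℝ, 1 < a → 1 < b →
      volume {p : ℝ × ℝ | p ∈ (Set.Ioc (1:ℝ) 2) ×ˢ (Set.Ioc (1:ℝ) 2) ∧
        (b * p.1, b * a, a * p.2) ∈ B} ≤ g (b * a) := by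
    intro a b ha hb
    have hmeas2 : MeasurableSet {p : ℝ × ℝ | p ∈ (Set.Ioc (1:ℝ) 2) ×ˢ (Set.Ioc (1:ℝ) 2) ∧
        (b * p.1, b * a, a * p.2) ∈ B} := by
      apply MeasurableSet.inter
      · exact measurableSet_Ioc.prod measurableSet_Ioc
      · have : Measurable fun p : ℝ × ℝ => (b * p.1, b * a, a * p.2) := by fun_prop
        exact this hB
    rw [show (volume : Measure (ℝ × ℝ)) = (volume : Measure ℝ).prod volume from
      Measure.volume_eq_prod ℝ ℝ, Measure.prod_apply hmeas2]
    calc ∫⁻ u, volume (Prod.mk u ⁻¹'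
          {p : ℝ × ℝ | p ∈ (Set.Ioc (1:ℝ) 2) ×ˢ (Set.Ioc (1:ℝ) 2) ∧
            (b * p.1, b * a, a * p.2) ∈ B})
        ≤ ∫⁻ u, f (b * u, b * a) := by
          apply lintegral_mono
          intro u
          calc volume (Prod.mk u ⁻¹'
              {p : ℝ × ℝ | p ∈ (Set.Ioc (1:ℝ) 2) ×ˢ (Set.Ioc (1:ℝ) 2) ∧
                (b * p.1, b * a, a * p.2) ∈ B})
              ≤ volume {v : ℝ | a * v ∈ {w : ℝ | (b * u, b * a, w) ∈ B}} := by
                apply measure_mono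
                intro v hv
                exact hv.2
            _ ≤ volume {w : ℝ | (b * u, b * a, w) ∈ B} := scale_volume_le ha _
            _ = f (b * u, b * a) := rfl
      _ ≤ ∫⁻ x, f (x, b * a) := by
          exact scale_lintegral_le hb (hfmeas.comp (measurable_id.prodMk measurable_const))
      _ = g (b * a) := rfl
  -- level 3 : for fixed a with 1 < a
  have key3 : ∀ a : ℝ, 1 < a →
      volume {y : ℝ × ℝ × ℝ | y ∈ (Set.Ioc (1:ℝ) 2) ×ˢ (Set.Ioc (1:ℝ) 2) ×ˢ (Set.Ioc (1:ℝ) 2) ∧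
        (y.1 * y.2.1, y.1 * a, a * y.2.2) ∈ B} ≤ volume B := by
    intro a ha
    have hmeas3 : MeasurableSet {y : ℝ × ℝ × ℝ |
        y ∈ (Set.Ioc (1:ℝ) 2) ×ˢ (Set.Ioc (1:ℝ) 2) ×ˢ (Set.Ioc (1:ℝ) 2) ∧
        (y.1 * y.2.1, y.1 * a, a * y.2.2) ∈ B} := by
      apply MeasurableSet.inter
      · exact measurableSet_Ioc.prod (measurableSet_Ioc.prod measurableSet_Ioc)
      · have : Measurable fun y : ℝ × ℝ × ℝ => (y.1 * y.2.1, y.1 * a, a * y.2.2) := by fun_prop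
        exact this hB
    rw [show (volume : Measure (ℝ × ℝ × ℝ)) = (volume : Measure ℝ).prod volume from
      Measure.volume_eq_prod ℝ (ℝ × ℝ), Measure.prod_apply hmeas3]
    calc ∫⁻ b, volume (Prod.mk b ⁻¹'
          {y : ℝ × ℝ × ℝ | y ∈ (Set.Ioc (1:ℝ) 2) ×ˢ (Set.Ioc (1:ℝ) 2) ×ˢ (Set.Ioc (1:ℝ) 2) ∧
            (y.1 * y.2.1, y.1 * a, a * y.2.2) ∈ B})
        ≤ ∫⁻ b, g (a * b) := by
          apply lintegral_mono
          intro b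
          by_cases hb : 1 < b
          · calc volume (Prod.mk b ⁻¹'
                {y : ℝ × ℝ × ℝ | y ∈ (Set.Ioc (1:ℝ) 2) ×ˢ (Set.Ioc (1:ℝ) 2) ×ˢ (Set.Ioc (1:ℝ) 2) ∧
                  (y.1 * y.2.1, y.1 * a, a * y.2.2) ∈ B})
                ≤ g (b * a) := by
                  refine le_trans (measure_mono ?_) (key2 a b ha hb)
                  intro p hp
                  exact ⟨⟨hp.1.2.1, hp.1.2.2⟩, hp.2⟩
              _ = g (a * b) := by rw [mul_comm]
          · have : (Prod.mk b ⁻¹'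
                {y : ℝ × ℝ × ℝ | y ∈ (Set.Ioc (1:ℝ) 2) ×ˢ (Set.Ioc (1:ℝ) 2) ×ˢ (Set.Ioc (1:ℝ) 2) ∧
                  (y.1 * y.2.1, y.1 * a, a * y.2.2) ∈ B}) = ∅ := by
              ext p
              simp only [Set.mem_preimage, Set.mem_setOf_eq, Set.mem_empty_iff_false, iff_false]
              rintro ⟨⟨hb', -⟩, -⟩
              exact hb hb'.1
            calc volume (Prod.mk b ⁻¹'
                {y : ℝ × ℝ × ℝ | y ∈ (Set.Ioc (1:ℝ) 2) ×ˢ (Set.Ioc (1:ℝ) 2) ×ˢ (Set.Ioc (1:ℝ) 2) ∧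
                  (y.1 * y.2.1, y.1 * a, a * y.2.2) ∈ B}) = 0 := by rw [this]; exact measure_empty
              _ ≤ g (a * b) := zero_le
      _ ≤ ∫⁻ y, g y := scale_lintegral_le ha hgmeas
      _ = volume B := hg_int
  -- top level
  rw [show (volume : Measure (ℝ × ℝ × ℝ × ℝ)) = (volume : Measure ℝ).prod volume from
    Measure.volume_eq_prod ℝ (ℝ × ℝ × ℝ), Measure.prod_apply hS]
  calc ∫⁻ a, volume (Prod.mk a ⁻¹' {h : ℝ × ℝ × ℝ × ℝ |
        h ∈ (Set.Ioc (1 : ℝ) 2) ×ˢ (Set.Ioc (1 : ℝ) 2) ×ˢ (Set.Ioc (1 : ℝ) 2) ×ˢ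
              (Set.Ioc (1 : ℝ) 2) ∧
        (h.2.1 * h.2.2.1, h.2.1 * h.1, h.1 * h.2.2.2) ∈ B})
      ≤ ∫⁻ a, (Set.Ioc (1:ℝ) 2).indicator (fun _ => volume B) a := by
        apply lintegral_mono
        intro a
        by_cases haI : a ∈ Set.Ioc (1:ℝ) 2
        · rw [Set.indicator_of_mem haI]
          refine le_trans (measure_mono ?_) (key3 a haI.1)
          intro y hy
          exact ⟨hy.1.2, hy.2⟩
        · rw [Set.indicator_of_notMem haI]
          have : (Prod.mk a ⁻¹' {h : ℝ × ℝ × ℝ × ℝ |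
              h ∈ (Set.Ioc (1 : ℝ) 2) ×ˢ (Set.Ioc (1 : ℝ) 2) ×ˢ (Set.Ioc (1 : ℝ) 2) ×ˢ
                    (Set.Ioc (1 : ℝ) 2) ∧
              (h.2.1 * h.2.2.1, h.2.1 * h.1, h.1 * h.2.2.2) ∈ B}) = ∅ := by
            ext y
            simp only [Set.mem_preimage, Set.mem_setOf_eq, Set.mem_empty_iff_false, iff_false]
            rintro ⟨⟨ha', -⟩, -⟩
            exact haI ha'
          calc volume (Prod.mk a ⁻¹' {h : ℝ × ℝ × ℝ × ℝ |
              h ∈ (Set.Ioc (1 : ℝ) 2) ×ˢ (Set.Ioc (1 : ℝ) 2) ×ˢ (Set.Ioc (1 : ℝ) 2) ×ˢ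
                    (Set.Ioc (1 : ℝ) 2) ∧
              (h.2.1 * h.2.2.1, h.2.1 * h.1, h.1 * h.2.2.2) ∈ B}) = 0 := by
                rw [this]; exact measure_empty
            _ ≤ 0 := le_rfl
    _ = volume B * volume (Set.Ioc (1:ℝ) 2) := lintegral_indicator_const measurableSet_Ioc _
    _ ≤ 2 * volume B := by
        rw [Real.volume_Ioc]
        norm_num [mul_comm]
        exact le_mul_of_one_le_left zero_le one_le_two
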